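/- Let A be an n×d real matrix of rank ρ, let k < ρ, let A_k = U_kΣ_kV_kᵀ be the truncated SVD of A with A_{ρ−k} = A − A_k, and let R be a d×t real matrix such that V_kᵀR has rank k. Define E = A_k − AR(V_kᵀR)⁺V_kᵀ. Then ‖E‖_F ≤ ‖A_{ρ−k}RRᵀV_k‖_F + ‖A_{ρ−k}R‖_F · ‖(V_kᵀR)⁺ − (V_kᵀR)ᵀ‖₂. -/

import Mathlib

open MeasureTheory
open scoped Matrix

/-- Frobenius norm of a real matrix. -/
noncomputable def frobNorm {m n : ℕ} (M : Matrix (Fin m) (Fin n) ℝ) : ℝ :=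
  Real.sqrt (∑ i, ∑ j, (M i j) ^ 2)

/-- Spectral (operator) norm of a real matrix, viewed as a linear map between
Euclidean spaces. -/
noncomputable def specNorm {m n : ℕ} (M : Matrix (Fin m) (Fin n) ℝ) : ℝ :=
  ‖LinearMap.toContinuousLinearMap (Matrix.toEuclideanLin M)‖

/-- `P` is the Moore–Penrose pseudoinverse of `M` (the four Penrose conditions;
such a `P` is unique). -/
def IsMoorePenrose {m n : ℕ} (M : Matrix (Fin m) (Fin n) ℝ)
    (P : Matrix (Fin n) (Fin m) ℝ) : Prop :=
  M * P * M = M ∧ P * M * P = P ∧ (M * P)ᵀ = M * P ∧ (P * M)ᵀ = P * M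

/-- `X` is an `n × k` cluster indicator matrix: each row `i` has a single nonzero
entry, in column `f i`, equal to `1/√(z_{f i})` where `z_j` is the number of rows
assigned to column `j`. -/
def IsIndicator {n k : ℕ} (X : Matrix (Fin n) (Fin k) ℝ) : Prop :=
  ∃ f : Fin n → Fin k, ∀ i j, X i j =
    if f i = j then 1 / Real.sqrt ((Finset.univ.filter fun i' => f i' = j).card) else 0

/-- The singular values of a `k × t` real matrix `M` (in some order): the square
roots of the eigenvalues of `M * Mᵀ`. -/
noncomputable def singVals {k t : ℕ} (M : Matrix (Fin k) (Fin t) ℝ) (i : Fin k) : ℝ :=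
  Real.sqrt ((Matrix.isHermitian_mul_conjTranspose_self M).eigenvalues i)

/-- The `d × t` random sign matrix with entries `±1/√t`, as a function of the
sample point `ω` (a `d × t` array of fair coins). -/
noncomputable def signMatrix (d t : ℕ) (ω : Fin d → Fin t → Bool) :
    Matrix (Fin d) (Fin t) ℝ :=
  Matrix.of fun i j => (if ω i j then (1 : ℝ) else -1) / Real.sqrt t

/-- The law of a `d × t` matrix of i.i.d. fair signs: the uniform probability
measure on all `d × t` sign patterns. -/
noncomputable def signMeasure (d t : ℕ) : Measure (Fin d → Fin t → Bool) :=
  (PMF.uniformOfFintype (Fin d → Fin t → Bool)).toMeasure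

lemma frob_nonneg {m n : ℕ} (M : Matrix (Fin m) (Fin n) ℝ) : 0 ≤ frobNorm M :=
  Real.sqrt_nonneg _

lemma frob_sq_nonneg {m n : ℕ} (M : Matrix (Fin m) (Fin n) ℝ) :
    0 ≤ ∑ i, ∑ j, (M i j) ^ 2 :=
  Finset.sum_nonneg fun _ _ => Finset.sum_nonneg fun _ _ => sq_nonneg _

lemma frob_eq_trace {m n : ℕ} (M : Matrix (Fin m) (Fin n) ℝ) :
    frobNorm M = Real.sqrt ((M * Mᵀ).trace) := by
  unfold frobNorm
  congr 1
  simp [Matrix.trace, Matrix.mul_apply, Matrix.diag, sq]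

lemma frob_mul_orth {m k d : ℕ} (M : Matrix (Fin m) (Fin k) ℝ)
    (V : Matrix (Fin d) (Fin k) ℝ) (hV : Vᵀ * V = 1) :
    frobNorm (M * Vᵀ) = frobNorm M := by
  rw [frob_eq_trace, frob_eq_trace]
  congr 2
  rw [Matrix.transpose_mul, Matrix.transpose_transpose, Matrix.mul_assoc,
    ← Matrix.mul_assoc Vᵀ, hV, Matrix.one_mul]

lemma frob_add_le {m n : ℕ} (X Y : Matrix (Fin m) (Fin n) ℝ) :
    frobNorm (X + Y) ≤ frobNorm X + frobNorm Y := by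
  have h : ∀ M : Matrix (Fin m) (Fin n) ℝ,
      frobNorm M = ‖(WithLp.equiv 2 (Fin m × Fin n → ℝ)).symm
        (fun p => M p.1 p.2)‖ := by
    intro M
    rw [EuclideanSpace.norm_eq]
    unfold frobNorm
    rw [Fintype.sum_prod_type]
    congr 1
    apply Finset.sum_congr rfl; intro i _
    apply Finset.sum_congr rfl; intro j _
    simp [Real.norm_eq_abs, sq_abs]
  rw [h, h, h]
  have : (WithLp.equiv 2 (Fin m × Fin n → ℝ)).symm (fun p => (X + Y) p.1 p.2)
      = (WithLp.equiv 2 (Fin m × Fin n → ℝ)).symm (fun p => X p.1 p.2)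
        + (WithLp.equiv 2 (Fin m × Fin n → ℝ)).symm (fun p => Y p.1 p.2) := by
    rfl
  rw [this]
  exact norm_add_le _ _

lemma spec_transpose {m n : ℕ} (M : Matrix (Fin m) (Fin n) ℝ) :
    specNorm Mᵀ = specNorm M := by
  unfold specNorm
  rw [← Matrix.conjTranspose_eq_transpose_of_trivial,
    Matrix.toEuclideanLin_conjTranspose_eq_adjoint,
    LinearMap.adjoint_toContinuousLinearMap]
  exact ContinuousLinearMap.adjoint.norm_map _

lemma spec_nonneg {m n : ℕ} (M : Matrix (Fin m) (Fin n) ℝ) : 0 ≤ specNorm M :=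
  norm_nonneg _

lemma euclid_norm_sq {n : ℕ} (v : Fin n → ℝ) :
    ‖(WithLp.equiv 2 (Fin n → ℝ)).symm v‖ ^ 2 = ∑ i, v i ^ 2 := by
  rw [EuclideanSpace.norm_eq, Real.sq_sqrt]
  · apply Finset.sum_congr rfl; intro i _; simp [Real.norm_eq_abs, sq_abs]
  · exact Finset.sum_nonneg fun _ _ => sq_nonneg _

lemma frob_mul_le_spec_left {m n p : ℕ} (C : Matrix (Fin m) (Fin n) ℝ)
    (X : Matrix (Fin n) (Fin p) ℝ) :
    frobNorm (C * X) ≤ specNorm C * frobNorm X := by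
  have key : ∀ j : Fin p, ∑ i, ((C * X) i j) ^ 2 ≤
      specNorm C ^ 2 * ∑ l, (X l j) ^ 2 := by
    intro j
    have h1 : ∑ i, ((C * X) i j) ^ 2
        = ‖(WithLp.equiv 2 (Fin m → ℝ)).symm (fun i => (C * X) i j)‖ ^ 2 := by
      rw [euclid_norm_sq]
    have h2 : (fun i => (C * X) i j) = C *ᵥ (fun l => X l j) := by
      funext i; simp [Matrix.mul_apply, Matrix.mulVec, dotProduct]
    have h3 : (WithLp.equiv 2 (Fin m → ℝ)).symm (fun i => (C * X) i j)
        = Matrix.toEuclideanLin C ((WithLp.equiv 2 (Fin n → ℝ)).symm (fun l => X l j)) := by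
      rw [h2]; rfl
    have h4 : ‖Matrix.toEuclideanLin C ((WithLp.equiv 2 (Fin n → ℝ)).symm (fun l => X l j))‖
        ≤ specNorm C * ‖(WithLp.equiv 2 (Fin n → ℝ)).symm (fun l => X l j)‖ := by
      exact (LinearMap.toContinuousLinearMap (Matrix.toEuclideanLin C)).le_opNorm _
    rw [h1, h3]
    calc ‖Matrix.toEuclideanLin C ((WithLp.equiv 2 (Fin n → ℝ)).symm (fun l => X l j))‖ ^ 2
        ≤ (specNorm C * ‖(WithLp.equiv 2 (Fin n → ℝ)).symm (fun l => X l j)‖) ^ 2 := by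
          apply sq_le_sq' <;> nlinarith [norm_nonneg (Matrix.toEuclideanLin C ((WithLp.equiv 2 (Fin n → ℝ)).symm (fun l => X l j))), norm_nonneg ((WithLp.equiv 2 (Fin n → ℝ)).symm (fun l => X l j)), spec_nonneg C]
      _ = specNorm C ^ 2 * ∑ l, (X l j) ^ 2 := by
          rw [mul_pow, euclid_norm_sq]
  unfold frobNorm
  have : ∑ i, ∑ j, ((C * X) i j) ^ 2 ≤ specNorm C ^ 2 * ∑ i, ∑ j, (X i j) ^ 2 := by
    calc ∑ i, ∑ j, ((C * X) i j) ^ 2 = ∑ j, ∑ i, ((C * X) i j) ^ 2 := Finset.sum_comm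
      _ ≤ ∑ j, specNorm C ^ 2 * ∑ l, (X l j) ^ 2 :=
          Finset.sum_le_sum fun j _ => key j
      _ = specNorm C ^ 2 * ∑ j, ∑ l, (X l j) ^ 2 := by rw [Finset.mul_sum]
      _ = specNorm C ^ 2 * ∑ i, ∑ j, (X i j) ^ 2 := by rw [Finset.sum_comm]
  calc Real.sqrt (∑ i, ∑ j, ((C * X) i j) ^ 2)
      ≤ Real.sqrt (specNorm C ^ 2 * ∑ i, ∑ j, (X i j) ^ 2) := Real.sqrt_le_sqrt this
    _ = specNorm C * Real.sqrt (∑ i, ∑ j, (X i j) ^ 2) := by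
        rw [Real.sqrt_mul (sq_nonneg _), Real.sqrt_sq (spec_nonneg C)]

lemma frob_transpose {m n : ℕ} (M : Matrix (Fin m) (Fin n) ℝ) :
    frobNorm Mᵀ = frobNorm M := by
  unfold frobNorm
  rw [Finset.sum_comm]
  rfl

lemma frob_mul_le_spec_right {m n p : ℕ} (M : Matrix (Fin m) (Fin n) ℝ)
    (N : Matrix (Fin n) (Fin p) ℝ) :
    frobNorm (M * N) ≤ frobNorm M * specNorm N := by
  rw [← frob_transpose (M * N), Matrix.transpose_mul]
  calc frobNorm (Nᵀ * Mᵀ) ≤ specNorm Nᵀ * frobNorm Mᵀ := frob_mul_le_spec_left _ _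
    _ = frobNorm M * specNorm N := by rw [spec_transpose, frob_transpose, mul_comm]

lemma frob_neg {m n : ℕ} (M : Matrix (Fin m) (Fin n) ℝ) :
    frobNorm (-M) = frobNorm M := by
  unfold frobNorm
  simp

lemma bp_eq_one {k t : ℕ} (B : Matrix (Fin k) (Fin t) ℝ) (P : Matrix (Fin t) (Fin k) ℝ)
    (hrank : B.rank = k) (h : B * P * B = B) : B * P = 1 := by
  have hsurj : Function.Surjective B.mulVecLin := by
    rw [← LinearMap.range_eq_top]
    apply Submodule.eq_top_of_finrank_eq
    unfold Matrix.rank at hrank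
    rw [hrank]
    simp
  have hmv : ∀ v : Fin k → ℝ, (B * P).mulVec v = v := by
    intro v
    obtain ⟨x, hx⟩ := hsurj v
    have h1 : (B * P).mulVec (B.mulVec x) = B.mulVec x := by
      rw [Matrix.mulVec_mulVec, h]
    rw [Matrix.mulVecLin_apply] at hx
    rw [← hx]
    exact h1
  ext i j
  have h2 := congrFun (hmv (Pi.single j 1)) i
  simp only [Matrix.mulVec, dotProduct, Pi.single_apply] at h2
  simp only [mul_ite, mul_one, mul_zero, Finset.sum_ite_eq', Finset.mem_univ, if_true] at h2
  rw [h2, Matrix.one_apply]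

/-- bound on ‖E‖_F = ‖A_k − AR(V_kᵀR)⁺V_kᵀ‖_F. -/
theorem statement13 (n d k ρ t : ℕ) (hkρ : k < ρ) (hρn : ρ ≤ n) (hρd : ρ ≤ d)
    (A : Matrix (Fin n) (Fin d) ℝ)
    (U : Matrix (Fin n) (Fin n) ℝ) (W : Matrix (Fin d) (Fin d) ℝ) (σ : ℕ → ℝ)
    (hU : Uᵀ * U = 1) (hW : Wᵀ * W = 1)
    (hmono : ∀ i j : ℕ, i ≤ j → σ j ≤ σ i)
    (hpos : ∀ i : ℕ, i < ρ → 0 < σ i)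
    (hzero : ∀ i : ℕ, ρ ≤ i → σ i = 0)
    (hA : A = U * (Matrix.of fun (i : Fin n) (j : Fin d) =>
      if (i : ℕ) = (j : ℕ) then σ i else 0) * Wᵀ)
    (Ak : Matrix (Fin n) (Fin d) ℝ)
    (hAk : Ak = U * (Matrix.of fun (i : Fin n) (j : Fin d) =>
      if (i : ℕ) = (j : ℕ) ∧ (i : ℕ) < k then σ i else 0) * Wᵀ)
    (Vk : Matrix (Fin d) (Fin k) ℝ)
    (hVk : Vk = W.submatrix id (Fin.castLE (by omega)))
    (R : Matrix (Fin d) (Fin t) ℝ)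
    (hrank : (Vkᵀ * R).rank = k)
    (P : Matrix (Fin t) (Fin k) ℝ) (hP : IsMoorePenrose (Vkᵀ * R) P) :
    frobNorm (Ak - A * R * P * Vkᵀ) ≤
      frobNorm ((A - Ak) * R * Rᵀ * Vk) +
        frobNorm ((A - Ak) * R) * specNorm (P - (Vkᵀ * R)ᵀ) := by
  have hkd : k ≤ d := le_trans (le_of_lt hkρ) hρd
  set c : Fin k → Fin d := Fin.castLE hkd with hc
  set S : Matrix (Fin d) (Fin k) ℝ :=
    Matrix.of (fun a l => if a = c l then 1 else 0) with hS
  set D : Matrix (Fin n) (Fin d) ℝ :=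
    Matrix.of (fun (i : Fin n) (j : Fin d) =>
      if (i : ℕ) = (j : ℕ) ∧ (i : ℕ) < k then σ i else 0) with hD
  -- Vk = W * S
  have hVkS : Vk = W * S := by
    rw [hVk]
    ext b l
    simp only [Matrix.mul_apply, hS, Matrix.of_apply, Matrix.submatrix_apply, id_eq,
      mul_ite, mul_one, mul_zero, Finset.sum_ite_eq', Finset.mem_univ, if_true]
  -- Sᵀ * S = 1
  have hStS : Sᵀ * S = (1 : Matrix (Fin k) (Fin k) ℝ) := by
    ext i j
    simp only [Matrix.mul_apply, Matrix.transpose_apply, hS, Matrix.of_apply,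
      ite_mul, one_mul, zero_mul, Finset.sum_ite_eq', Finset.mem_univ, if_true,
      Matrix.one_apply]
    by_cases hij : i = j
    · simp [hij]
    · have : c i ≠ c j := fun hcc => hij (Fin.castLE_injective hkd hcc)
      simp [hij, this]
  -- Vkᵀ * Vk = 1
  have hVtV : Vkᵀ * Vk = (1 : Matrix (Fin k) (Fin k) ℝ) := by
    rw [hVkS, Matrix.transpose_mul, Matrix.mul_assoc, ← Matrix.mul_assoc Wᵀ, hW,
      Matrix.one_mul, hStS]
  -- D * S entries
  have hDS : D * S = Matrix.of (fun (i : Fin n) (l : Fin k) =>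
      if (i : ℕ) = (l : ℕ) ∧ (i : ℕ) < k then σ i else 0) := by
    ext i l
    simp only [Matrix.mul_apply, hS, hD, Matrix.of_apply, mul_ite, mul_one, mul_zero,
      Finset.sum_ite_eq', Finset.mem_univ, if_true]
    simp [hc]
  -- D * (S * Sᵀ) = D
  have hDSS : D * (S * Sᵀ) = D := by
    rw [← Matrix.mul_assoc, hDS]
    ext i b
    rw [Matrix.mul_apply]
    by_cases hik : (i : ℕ) < k
    · rw [Finset.sum_eq_single (⟨(i : ℕ), hik⟩ : Fin k)]
      · simp only [hD, hS, Matrix.of_apply, Matrix.transpose_apply]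
        by_cases hb : (b : ℕ) = (i : ℕ)
        · have hbc : b = c ⟨(i : ℕ), hik⟩ := by
            apply Fin.ext; simpa [hc] using hb
          simp [hik, hbc, hb, hc, eq_comm]
        · have h1 : (b = c ⟨(i : ℕ), hik⟩) = False := by
            simp only [eq_iff_iff, iff_false]
            intro hcc; apply hb; simpa [hc, Fin.ext_iff] using hcc
          have h2 : ((i : ℕ) = (b : ℕ) ∧ (i : ℕ) < k) = False := by
            simp only [eq_iff_iff, iff_false]
            intro hh; exact hb hh.1.symm
          simp [h1, h2]
      · intro l _ hl
        have : (i : ℕ) ≠ (l : ℕ) := by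
          intro hh; apply hl; apply Fin.ext; simp [hh.symm]
        simp [this]
      · intro hmem; exact absurd (Finset.mem_univ _) hmem
    · simp only [hD, Matrix.of_apply, Matrix.transpose_apply, hS]
      rw [Finset.sum_eq_zero]
      · simp [hik]
      · intro l _
        simp [hik]
  -- Ak * Vk * Vkᵀ = Ak
  have hAkVV : Ak * Vk * Vkᵀ = Ak := by
    rw [hAk, hVkS, Matrix.transpose_mul]
    simp only [Matrix.mul_assoc]
    rw [← Matrix.mul_assoc Wᵀ W, hW, Matrix.one_mul,
      ← Matrix.mul_assoc S Sᵀ Wᵀ, ← Matrix.mul_assoc D (S * Sᵀ) Wᵀ, hDSS]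
  have hBP : (Vkᵀ * R) * P = 1 := bp_eq_one _ P hrank hP.1
  have hAkRP : Ak * R * P * Vkᵀ = Ak := by
    conv_lhs => rw [← hAkVV]
    simp only [Matrix.mul_assoc]
    rw [← Matrix.mul_assoc Vkᵀ R (P * Vkᵀ), ← Matrix.mul_assoc (Vkᵀ * R) P Vkᵀ,
      hBP, Matrix.one_mul, ← Matrix.mul_assoc Ak Vk Vkᵀ, hAkVV]
  have hEeq : Ak - A * R * P * Vkᵀ = -((A - Ak) * R * P * Vkᵀ) := by
    have h1 : (A - Ak) * R * P * Vkᵀ = A * R * P * Vkᵀ - Ak := by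
      simp only [Matrix.sub_mul]
      rw [hAkRP]
    rw [h1]; abel
  have hBt : (Vkᵀ * R)ᵀ = Rᵀ * Vk := by
    rw [Matrix.transpose_mul, Matrix.transpose_transpose]
  have hdecomp : (A - Ak) * R * P * Vkᵀ =
      ((A - Ak) * R * Rᵀ * Vk) * Vkᵀ + ((A - Ak) * R * (P - (Vkᵀ * R)ᵀ)) * Vkᵀ := by
    rw [hBt]
    have hPsplit : P = Rᵀ * Vk + (P - Rᵀ * Vk) := by abel
    conv_lhs => rw [hPsplit]
    rw [Matrix.mul_add ((A - Ak) * R), Matrix.add_mul,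
      ← Matrix.mul_assoc ((A - Ak) * R) Rᵀ Vk]
  calc frobNorm (Ak - A * R * P * Vkᵀ)
      = frobNorm ((A - Ak) * R * P * Vkᵀ) := by rw [hEeq, frob_neg]
    _ = frobNorm (((A - Ak) * R * Rᵀ * Vk) * Vkᵀ
          + ((A - Ak) * R * (P - (Vkᵀ * R)ᵀ)) * Vkᵀ) := by rw [hdecomp]
    _ ≤ frobNorm (((A - Ak) * R * Rᵀ * Vk) * Vkᵀ)
          + frobNorm (((A - Ak) * R * (P - (Vkᵀ * R)ᵀ)) * Vkᵀ) := frob_add_le _ _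
    _ = frobNorm ((A - Ak) * R * Rᵀ * Vk)
          + frobNorm ((A - Ak) * R * (P - (Vkᵀ * R)ᵀ)) := by
        rw [frob_mul_orth _ Vk hVtV, frob_mul_orth _ Vk hVtV]
    _ ≤ frobNorm ((A - Ak) * R * Rᵀ * Vk)
          + frobNorm ((A - Ak) * R) * specNorm (P - (Vkᵀ * R)ᵀ) := by
        have h := frob_mul_le_spec_right ((A - Ak) * R) (P - (Vkᵀ * R)ᵀ)
        rw [Matrix.mul_assoc] at h ⊢ <;> try skip
        linarith [frob_mul_le_spec_right ((A - Ak) * R) (P - (Vkᵀ * R)ᵀ)]
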